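/- Let (X,d) be a complete metric space and let F be a multivalued mapping from X to X with closed values such that: (i) for every sequence (x_n) converging to a point x ∈ X with lim_n d(F(x_n),x_n) = 0 one has d(F(x),x) = 0; (ii) for some α < 1, α ≥ 0, for each x ∈ X there exists y ∈ F(x) with d(F(y),y) ≤ α d(F(x),x); and (iii) the closure of F(X) = ⋃_{x∈X} F(x) is compact. Then F has a fixed point. -/
import Mathlib


open Metric Filter

/-- **Theorem 1.7.** Let `(X,d)` be a complete metric space and `F` a multivalued mapping
from `X` to `X` with nonempty closed values such that:
(i) for every sequence `xₙ → x` with `d(F(xₙ),xₙ) → 0` one has `d(F(x),x) = 0`;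
(ii) for some `0 ≤ α < 1`, for each `x ∈ X` there exists `y ∈ F x` with
`d(F(y),y) ≤ α·d(F(x),x)`; and (iii) the closure of `F(X) = ⋃ x, F x` is compact.
Then `F` has a fixed point. -/
theorem fixed_point_of_contractive_dist_compact_range
    {X : Type*} [MetricSpace X] [CompleteSpace X] [Nonempty X]
    (F : X → Set X) (hFne : ∀ x, (F x).Nonempty) (hFcl : ∀ x, IsClosed (F x))
    (hreg : ∀ (u : ℕ → X) (x : X), Tendsto u atTop (nhds x) →
      Tendsto (fun n => infDist (u n) (F (u n))) atTop (nhds 0) →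
      infDist x (F x) = 0)
    (α : ℝ) (hα : 0 ≤ α) (hα1 : α < 1)
    (hF : ∀ x : X, ∃ y ∈ F x, infDist y (F y) ≤ α * infDist x (F x))
    (hcpt : IsCompact (closure (⋃ x : X, F x))) :
    ∃ x : X, x ∈ F x := by
  -- choice function
  choose g hg hgd using hF
  obtain ⟨x₀⟩ := ‹Nonempty X›
  -- iterate starting from g x₀
  set v : ℕ → X := fun n => g^[n] (g x₀) with hv
  have hvmem : ∀ n, v n ∈ ⋃ x : X, F x := by
    intro n
    induction n with
    | zero => exact Set.mem_iUnion.2 ⟨x₀, hg x₀⟩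
    | succ k ih =>
      have : v (k+1) = g (v k) := by
        simp [hv, Function.iterate_succ_apply']
      rw [this]
      exact Set.mem_iUnion.2 ⟨v k, hg (v k)⟩
  have hdec : ∀ n, infDist (v n) (F (v n)) ≤ α ^ n * infDist (g x₀) (F (g x₀)) := by
    intro n
    induction n with
    | zero => simp [hv]
    | succ k ih =>
      have h1 : v (k+1) = g (v k) := by simp [hv, Function.iterate_succ_apply']
      rw [h1]
      calc infDist (g (v k)) (F (g (v k))) ≤ α * infDist (v k) (F (v k)) := hgd (v k)
        _ ≤ α * (α ^ k * infDist (g x₀) (F (g x₀))) := by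
            exact mul_le_mul_of_nonneg_left ih hα
        _ = α ^ (k+1) * infDist (g x₀) (F (g x₀)) := by ring
  have hd0 : Tendsto (fun n => infDist (v n) (F (v n))) atTop (nhds 0) := by
    have hgeo : Tendsto (fun n => α ^ n * infDist (g x₀) (F (g x₀))) atTop (nhds 0) := by
      have := tendsto_pow_atTop_nhds_zero_of_lt_one hα hα1
      simpa using this.mul_const (infDist (g x₀) (F (g x₀)))
    refine squeeze_zero (fun n => infDist_nonneg) hdec hgeo
  have hvmem' : ∀ n, v n ∈ closure (⋃ x : X, F x) := fun n => subset_closure (hvmem n)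
  obtain ⟨x, -, φ, hφ, hconv⟩ := hcpt.tendsto_subseq hvmem'
  have hd0' : Tendsto (fun n => infDist (v (φ n)) (F (v (φ n)))) atTop (nhds 0) :=
    hd0.comp hφ.tendsto_atTop
  have hx : infDist x (F x) = 0 := hreg (v ∘ φ) x hconv hd0'
  exact ⟨x, ((hFcl x).mem_iff_infDist_zero (hFne x)).2 hx⟩
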